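/- Let 𝔫 be a Lie algebra over a field of characteristic zero admitting an LR-structure. Then 𝔫 is two-step solvable, i.e., its derived subalgebra [𝔫,𝔫] is abelian. -/

import Mathlib

/-- An LR-structure on a Lie algebra `𝔫`: a bilinear product `x·y` with
`[x,y] = x·y − y·x`, `x·(y·z) = y·(x·z)` and `(x·y)·z = (x·z)·y`. -/
def IsLRStructure {K N : Type*} [Field K] [LieRing N] [LieAlgebra K N]
    (mul : N →ₗ[K] N →ₗ[K] N) : Prop :=
  (∀ x y : N, ⁅x, y⁆ = mul x y - mul y x) ∧
  (∀ x y z : N, mul x (mul y z) = mul y (mul x z)) ∧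
  (∀ x y z : N, mul (mul x y) z = mul (mul x z) y)

/-- A Lie algebra over a field of characteristic zero admitting an LR-structure is
two-step solvable: its derived subalgebra is abelian. -/
theorem lr_structure_implies_two_step_solvable
    (K : Type*) (N : Type*) [Field K] [CharZero K]
    [LieRing N] [LieAlgebra K N]
    (mul : N →ₗ[K] N →ₗ[K] N) (h : IsLRStructure mul) :
    LieAlgebra.derivedSeries K N 2 = ⊥ := by
  obtain ⟨h1, h2, h3⟩ := h
  have swap2 : ∀ u v w z : N, mul (mul u v) (mul w z) = mul (mul u z) (mul w v) := by
    intro u v w z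
    rw [h2 (mul u v) w z, h3 u v z, h2 w (mul u z) v]
  have swap1 : ∀ u v w z : N, mul (mul u v) (mul w z) = mul (mul w v) (mul u z) := by
    intro u v w z
    rw [h3 u v (mul w z), h2 u w z, ← h3 w v (mul u z)]
  have comm : ∀ u v w z : N, mul (mul u v) (mul w z) = mul (mul w z) (mul u v) := by
    intro u v w z
    rw [swap1 u v w z, swap2 w v u z]
  have key : ∀ a b c d : N, ⁅(⁅a, b⁆ : N), (⁅c, d⁆ : N)⁆ = 0 := by
    intro a b c d
    rw [h1 ⁅a, b⁆ ⁅c, d⁆, h1 a b, h1 c d]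
    simp only [map_sub, LinearMap.sub_apply]
    rw [comm a b c d, comm a b d c, comm b a c d, comm b a d c]
    abel
  -- membership in the derived ideal lies in the span of brackets
  set S : Set N := {m : N | ∃ a b : N, ⁅a, b⁆ = m} with hS
  have hmem : ∀ y : N, y ∈ LieAlgebra.derivedSeries K N 1 → y ∈ Submodule.span K S := by
    intro y hy
    have heq := LieSubmodule.lieIdeal_oper_eq_linear_span' (R := K) (L := N) (M := N)
      (I := ⊤) (N := ⊤)
    have hy' : y ∈ (⁅(⊤ : LieIdeal K N), (⊤ : LieSubmodule K N N)⁆ :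
        LieSubmodule K N N) := hy
    rw [← LieSubmodule.mem_toSubmodule, heq] at hy'
    convert hy' using 2
    swap
    ext m
    simp [hS]
    rfl
  have main : ∀ x ∈ Submodule.span K S, ∀ m ∈ Submodule.span K S, ⁅x, m⁆ = 0 := by
    intro x hx
    refine Submodule.span_induction (p := fun x _ => ∀ m ∈ Submodule.span K S, ⁅x, m⁆ = 0)
      ?_ ?_ ?_ ?_ hx
    · rintro x' ⟨a, b, rfl⟩ m hm
      refine Submodule.span_induction (p := fun m _ => ⁅(⁅a, b⁆ : N), m⁆ = 0) ?_ ?_ ?_ ?_ hm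
      · rintro m' ⟨c, d, rfl⟩
        exact key a b c d
      · exact lie_zero _
      · intro m₁ m₂ _ _ e1 e2; rw [lie_add, e1, e2, add_zero]
      · intro t m' _ e; rw [lie_smul, e, smul_zero]
    · intro m _; exact zero_lie m
    · intro x₁ x₂ _ _ e1 e2 m hm; rw [add_lie, e1 m hm, e2 m hm, add_zero]
    · intro t x' _ e m hm; rw [smul_lie, e m hm, smul_zero]
  have : LieAlgebra.derivedSeries K N 2 = ⁅LieAlgebra.derivedSeries K N 1,
      LieAlgebra.derivedSeries K N 1⁆ := rfl
  rw [this, LieSubmodule.lie_eq_bot_iff]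
  intro x hx m hm
  exact main x (hmem x hx) m (hmem m hm)
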